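/- Let ℓ be an odd prime, m ≥ 2, and 0 < j < m. Let Y ∈ GL₂(Z/ℓ^{2m+1}Z) be of the form Y = [[a + ℓʲ·x, b],[ℓ^{2m}·z, a + ℓʲ·w]] for integers a, x, b, z, w. If for every natural number k and every R ∈ 𝕂(ℓ^{2m+1}) the discriminant Δ(Yᵏ·R) is a square in Z/ℓ^{2m+1}Z, then x ≡ w (mod ℓ), i.e. the diagonal entries of Y are congruent modulo ℓ^{j+1}. -/

import Mathlib

/-- auxiliary recursive sequence: `Y^k = U k • Y - (d * U (k-1)) • 1` for a 2×2 matrix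
with trace `T` and determinant `d`. -/
def Useq (T d : ℤ) : ℕ → ℤ
  | 0 => 0
  | 1 => 1
  | (n+2) => T * Useq T d (n+1) - d * Useq T d n

lemma Useq_zero (T d : ℤ) : Useq T d 0 = 0 := rfl
lemma Useq_one (T d : ℤ) : Useq T d 1 = 1 := rfl
lemma Useq_add_two (T d : ℤ) (n : ℕ) :
    Useq T d (n+2) = T * Useq T d (n+1) - d * Useq T d n := rfl

lemma Useq_mul_sub (A D : ℤ) : ∀ k, (A - D) * Useq (A+D) (A*D) k = A^k - D^k := by
  intro k
  induction k using Nat.twoStepInduction with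
  | zero => simp [Useq_zero]
  | one => simp [Useq_one]
  | more n ih0 ih1 =>
    rw [Useq_add_two]
    linear_combination (A+D) * ih1 - (A*D) * ih0

lemma Useq_modEq (T d d' M : ℤ) (h : d ≡ d' [ZMOD M]) :
    ∀ k, Useq T d k ≡ Useq T d' k [ZMOD M] := by
  intro k
  induction k using Nat.twoStepInduction with
  | zero => rfl
  | one => rfl
  | more n ih0 ih1 =>
    rw [Useq_add_two, Useq_add_two]
    exact ((Int.ModEq.refl T).mul ih1).sub (h.mul ih0)

lemma Useq_norm (T d : ℤ) : ∀ k,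
    (Useq T d (k+1))^2 - T * Useq T d (k+1) * Useq T d k + d * (Useq T d k)^2 = d^k := by
  intro k
  induction k with
  | zero => simp [Useq_zero, Useq_one]
  | succ n ih =>
    rw [Useq_add_two, pow_succ]
    linear_combination d * ih

lemma ypow (A D b c : ℤ) : ∀ k,
    (!![A, b; c, D] : Matrix (Fin 2) (Fin 2) ℤ) ^ (k+1) =
      !![Useq (A+D) (A*D - b*c) (k+1) * A - (A*D - b*c) * Useq (A+D) (A*D - b*c) k,
         Useq (A+D) (A*D - b*c) (k+1) * b;
         Useq (A+D) (A*D - b*c) (k+1) * c,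
         Useq (A+D) (A*D - b*c) (k+1) * D - (A*D - b*c) * Useq (A+D) (A*D - b*c) k] := by
  intro k
  induction k with
  | zero =>
    rw [pow_one]
    ext i j
    fin_cases i <;> fin_cases j <;> simp [Useq_one, Useq_zero]
  | succ n ih =>
    rw [pow_succ, ih, Useq_add_two]
    ext i j
    fin_cases i <;> fin_cases j <;>
      simp [Matrix.mul_apply, Fin.sum_univ_two] <;> ring

lemma pow_prime_step (ℓ : ℕ) (hℓ : ℓ.Prime) (hodd : ℓ ≠ 2) (c : ℕ) (hc : 1 ≤ c)
    (Y t : ℤ) :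
    (Y + (ℓ:ℤ)^c * t)^ℓ ≡ Y^ℓ + (ℓ:ℤ)^(c+1) * t * Y^(ℓ-1) [ZMOD (ℓ:ℤ)^(c+2)] := by
  have h3 : 3 ≤ ℓ := by
    rcases hℓ.two_le.lt_or_eq with h | h
    · omega
    · exact absurd h.symm hodd
  rw [Int.modEq_comm, Int.modEq_iff_dvd]
  have hexp : (Y + (ℓ:ℤ)^c * t)^ℓ =
      ∑ k ∈ Finset.range (ℓ+1), ((ℓ:ℤ)^c*t)^k * Y^(ℓ-k) * (ℓ.choose k : ℤ) := by
    rw [add_comm Y]; exact add_pow _ _ _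
  rw [hexp]
  have hsplit : ∑ k ∈ Finset.range (ℓ+1), ((ℓ:ℤ)^c*t)^k * Y^(ℓ-k) * (ℓ.choose k : ℤ)
      = (Y^ℓ + (ℓ:ℤ)^(c+1) * t * Y^(ℓ-1))
        + ∑ k ∈ Finset.Ico 2 (ℓ+1), ((ℓ:ℤ)^c*t)^k * Y^(ℓ-k) * (ℓ.choose k : ℤ) := by
    rw [Finset.range_eq_Ico]
    rw [← Finset.sum_Ico_consecutive _ (by omega : 0 ≤ 2) (by omega : 2 ≤ ℓ+1)]
    congr 1
    rw [show Finset.Ico 0 2 = {0, 1} from rfl]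
    rw [Finset.sum_insert (by decide), Finset.sum_singleton]
    simp [Nat.choose_one_right]
    rw [pow_succ]
    ring
  rw [hsplit]
  have : (Y^ℓ + (ℓ:ℤ)^(c+1) * t * Y^(ℓ-1))
        + (∑ k ∈ Finset.Ico 2 (ℓ+1), ((ℓ:ℤ)^c*t)^k * Y^(ℓ-k) * (ℓ.choose k : ℤ))
        - (Y^ℓ + (ℓ:ℤ)^(c+1) * t * Y^(ℓ-1))
      = ∑ k ∈ Finset.Ico 2 (ℓ+1), ((ℓ:ℤ)^c*t)^k * Y^(ℓ-k) * (ℓ.choose k : ℤ) := by ring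
  rw [this]
  apply Finset.dvd_sum
  intro k hk
  obtain ⟨hk2, hkl⟩ := Finset.mem_Ico.mp hk
  rcases Nat.lt_or_ge k ℓ with hlt | hge
  · obtain ⟨C', hC'⟩ := hℓ.dvd_choose_self (by omega) hlt
    rw [hC']
    have h1 : ((ℓ:ℤ)^c*t)^k = (ℓ:ℤ)^(c*k) * t^k := by rw [mul_pow, ← pow_mul]
    rw [h1]
    push_cast
    have hdvd : (ℓ:ℤ)^(c+2) ∣ (ℓ:ℤ)^(c*k) * (ℓ:ℤ) := by
      rw [← pow_succ]
      exact pow_dvd_pow _ (by nlinarith)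
    calc (ℓ:ℤ)^(c+2) ∣ (ℓ:ℤ)^(c*k) * (ℓ:ℤ) := hdvd
      _ ∣ (ℓ:ℤ)^(c*k) * t^k * Y^(ℓ-k) * ((ℓ:ℤ) * (C':ℤ)) := ⟨t^k * Y^(ℓ-k) * (C':ℤ), by ring⟩
  · have hkeq : k = ℓ := by omega
    have h1 : ((ℓ:ℤ)^c*t)^k = (ℓ:ℤ)^(c*k) * t^k := by rw [mul_pow, ← pow_mul]
    rw [h1]
    exact Dvd.dvd.mul_right (Dvd.dvd.mul_right (Dvd.dvd.mul_right
      (pow_dvd_pow _ (by nlinarith)) _) _) _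

lemma key_pow (ℓ : ℕ) (hℓ : ℓ.Prime) (hodd : ℓ ≠ 2) (j : ℕ) (hj : 1 ≤ j)
    (Dd v : ℤ) : ∀ n : ℕ, ∃ t : ℤ,
    (Dd + (ℓ:ℤ)^j * v)^(ℓ^n) = Dd^(ℓ^n) + (ℓ:ℤ)^(j+n) * t ∧
      Dd * t ≡ v * Dd^(ℓ^n) [ZMOD (ℓ:ℤ)] := by
  intro n
  induction n with
  | zero =>
    refine ⟨v, by simp, ?_⟩
    simp [pow_one]
    rw [mul_comm]
  | succ n ih =>
    obtain ⟨t, ht, htc⟩ := ih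
    have hstep := pow_prime_step ℓ hℓ hodd (j+n) (by omega) (Dd^(ℓ^n)) t
    rw [← ht] at hstep
    have hpowexp : ((Dd + (ℓ:ℤ)^j * v)^(ℓ^n))^ℓ = (Dd + (ℓ:ℤ)^j * v)^(ℓ^(n+1)) := by
      rw [← pow_mul, pow_succ]
    have hpowexp2 : (Dd^(ℓ^n))^ℓ = Dd^(ℓ^(n+1)) := by rw [← pow_mul, pow_succ]
    rw [hpowexp, hpowexp2] at hstep
    obtain ⟨q, hq⟩ := Int.modEq_iff_dvd.mp hstep
    refine ⟨t * (Dd^(ℓ^n))^(ℓ-1) - (ℓ:ℤ) * q, ?_, ?_⟩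
    · have h2 : (j + n + 2) = (j + (n+1)) + 1 := by omega
      rw [h2] at hq
      rw [show j + (n+1) = j + n + 1 from by omega]
      rw [pow_succ] at hq
      linear_combination -hq
    · have h1 : Dd * (t * (Dd^(ℓ^n))^(ℓ-1) - (ℓ:ℤ) * q)
          ≡ (Dd * t) * (Dd^(ℓ^n))^(ℓ-1) [ZMOD (ℓ:ℤ)] := by
        have heq : Dd * (t * (Dd^(ℓ^n))^(ℓ-1) - (ℓ:ℤ) * q)
            = (Dd * t) * (Dd^(ℓ^n))^(ℓ-1) - (ℓ:ℤ) * (Dd * q) := by ring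
        rw [heq]
        have : (ℓ:ℤ) * (Dd * q) ≡ 0 [ZMOD (ℓ:ℤ)] :=
          Int.modEq_zero_iff_dvd.mpr ⟨Dd*q, rfl⟩
        simpa using (Int.ModEq.refl ((Dd * t) * (Dd^(ℓ^n))^(ℓ-1))).sub this
      refine h1.trans ?_
      refine (htc.mul (Int.ModEq.refl ((Dd^(ℓ^n))^(ℓ-1)))).trans ?_
      have heq2 : v * Dd^(ℓ^n) * (Dd^(ℓ^n))^(ℓ-1) = v * Dd^(ℓ^(n+1)) := by
        rw [mul_assoc, ← pow_succ' (Dd^(ℓ^n)), show ℓ - 1 + 1 = ℓ from by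
          have := hℓ.two_le; omega, ← pow_mul, pow_succ]
      rw [heq2]

lemma exists_nonsquare_add (ℓ : ℕ) (hℓ : ℓ.Prime) (hodd : ℓ ≠ 2) (μ : ZMod ℓ) (hμ : μ ≠ 0) :
    ∃ c : ZMod ℓ, ∀ d : ZMod ℓ, μ^2 + c^2 ≠ d^2 := by
  haveI : Fact ℓ.Prime := ⟨hℓ⟩
  by_contra h
  push_neg at h
  have key : ∀ i : ℕ, ∃ d : ZMod ℓ, (i : ZMod ℓ) * μ^2 = d^2 := by
    intro i
    induction i with
    | zero => exact ⟨0, by simp⟩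
    | succ i ih =>
      obtain ⟨d, hd⟩ := ih
      obtain ⟨d', hd'⟩ := h d
      refine ⟨d', ?_⟩
      push_cast
      rw [add_mul, one_mul, hd, ← hd', add_comm]
  have hall : ∀ y : ZMod ℓ, IsSquare y := by
    intro y
    obtain ⟨d, hd⟩ := key (y * (μ^2)⁻¹).val
    rw [ZMod.natCast_val, ZMod.cast_id] at hd
    have hμ2 : (μ^2) ≠ 0 := pow_ne_zero _ hμ
    have : y = d^2 := by
      rw [← hd, mul_assoc, inv_mul_cancel₀ hμ2, mul_one]
    exact ⟨d, by rw [this]; ring⟩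
  obtain ⟨u, hu⟩ := FiniteField.exists_nonsquare
    (by rw [ZMod.ringChar_zmod_n]; exact hodd : ringChar (ZMod ℓ) ≠ 2)
  exact hu (hall u)

/-- Membership in the group `𝕂(ℓ^(2m+1))`: matrices `[[r, s],[ℓ^(2m)·s, t]]` with
`r ≡ t (mod ℓ^(2m))`. -/
def Kmem (ℓ m : ℕ) (g : Matrix (Fin 2) (Fin 2) (ZMod (ℓ ^ (2 * m + 1)))) : Prop :=
  ∃ r s t : ZMod (ℓ ^ (2 * m + 1)),
    g = !![r, s; (ℓ : ZMod (ℓ ^ (2 * m + 1))) ^ (2 * m) * s, t] ∧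
    ZMod.castHom (pow_dvd_pow ℓ (by omega : 2 * m ≤ 2 * m + 1)) (ZMod (ℓ ^ (2 * m))) r =
      ZMod.castHom (pow_dvd_pow ℓ (by omega : 2 * m ≤ 2 * m + 1)) (ZMod (ℓ ^ (2 * m))) t

/-- Let `Y ∈ GL₂(ℤ/ℓ^(2m+1)ℤ)` be `[[a + ℓʲx, b],[ℓ^(2m)z, a + ℓʲw]]`
with `0 < j < m`.  If `Δ(Yᵏ·R)` is a square for every `k` and every `R ∈ 𝕂(ℓ^(2m+1))`,
then `x ≡ w (mod ℓ)`. -/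
theorem stmt_7 (ℓ m j : ℕ) (hℓ : ℓ.Prime) (hℓodd : ℓ ≠ 2) (hm : 2 ≤ m)
    (hj0 : 0 < j) (hjm : j < m)
    (Y : Matrix.GeneralLinearGroup (Fin 2) (ZMod (ℓ ^ (2 * m + 1))))
    (a x b z w : ℤ)
    (hY : Y.val = !![(a : ZMod (ℓ ^ (2 * m + 1))) + (ℓ : ZMod (ℓ ^ (2 * m + 1))) ^ j * (x : ZMod (ℓ ^ (2 * m + 1))),
        (b : ZMod (ℓ ^ (2 * m + 1)));
        (ℓ : ZMod (ℓ ^ (2 * m + 1))) ^ (2 * m) * (z : ZMod (ℓ ^ (2 * m + 1))),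
        (a : ZMod (ℓ ^ (2 * m + 1))) + (ℓ : ZMod (ℓ ^ (2 * m + 1))) ^ j * (w : ZMod (ℓ ^ (2 * m + 1)))])
    (hsq : ∀ (k : ℕ) (R : Matrix.GeneralLinearGroup (Fin 2) (ZMod (ℓ ^ (2 * m + 1)))),
      Kmem ℓ m R.val → ∃ s : ZMod (ℓ ^ (2 * m + 1)),
        (Matrix.trace (Y.val ^ k * R.val)) ^ 2 - 4 * (Y.val ^ k * R.val).det = s ^ 2) :
    x ≡ w [ZMOD (ℓ : ℤ)] := by
  by_contra hxw
  haveI : Fact ℓ.Prime := ⟨hℓ⟩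
  haveI : NeZero (ℓ ^ (2*m+1)) := ⟨pow_ne_zero _ hℓ.pos.ne'⟩
  have hl0 : (ℓ:ℤ) ≠ 0 := by exact_mod_cast hℓ.pos.ne'
  set Rg := ZMod (ℓ ^ (2*m+1)) with hRg
  set A : ℤ := a + (ℓ:ℤ)^j * x with hA
  set D : ℤ := a + (ℓ:ℤ)^j * w with hD
  set v : ℤ := x - w with hv_def
  set L : ℤ := (ℓ:ℤ)^(2*m) with hL
  set δp : ℤ := A * D - b * (L * z) with hδp
  set T : ℤ := A + D with hT
  set n := m - j with hn
  have hjn : j + n = m := by omega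
  have hn1 : 1 ≤ n := by omega
  set g := ℓ^n with hg
  have hg1 : 1 ≤ g := Nat.one_le_pow _ _ hℓ.pos
  set K := 2*g with hK
  have hK1 : K - 1 + 1 = K := by omega
  have hModL : (ℓ:ℤ)^(2*m+1) = L * ℓ := by rw [hL, pow_succ]
  have hv : ¬ (ℓ:ℤ) ∣ v := by
    intro hdvd
    have h1 : (ℓ:ℤ) ∣ w - x := by
      have h2 := dvd_neg.mpr hdvd
      rwa [hv_def, neg_sub] at h2
    exact hxw (Int.modEq_iff_dvd.mpr h1)
  -- the integer matrix underlying Y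
  set M : Matrix (Fin 2) (Fin 2) ℤ := !![A, b; L*z, D] with hM
  have hYm : Y.val = (Int.castRingHom Rg).mapMatrix M := by
    rw [hY, hM]
    ext i j'
    fin_cases i <;> fin_cases j' <;>
      simp [RingHom.mapMatrix_apply, Matrix.map_apply, hA, hD, hL] <;> push_cast <;> ring
  have hdetY : Y.val.det = ((δp : ℤ) : Rg) := by
    rw [hYm, ← RingHom.map_det]
    congr 1
    rw [hM, Matrix.det_fin_two_of, hδp]
    simp +zetaDelta
  have hYunit : IsUnit Y.val.det :=
    (Matrix.isUnit_iff_isUnit_det _).mp Y.isUnit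
  have hδpF : ((δp : ℤ) : ZMod ℓ) ≠ 0 := by
    have h1 : IsUnit ((δp:ℤ) : ZMod ℓ) := by
      have h2 := hYunit.map (ZMod.castHom (dvd_pow_self ℓ (by omega : 2*m+1 ≠ 0)) (ZMod ℓ))
      rwa [hdetY, map_intCast] at h2
    exact h1.ne_zero
  have hDF : ((D:ℤ) : ZMod ℓ) ≠ 0 := by
    intro h0
    apply hδpF
    have h1 : ((δp:ℤ) : ZMod ℓ)
        = ((A:ℤ):ZMod ℓ) * ((D:ℤ):ZMod ℓ) - ((b:ℤ):ZMod ℓ)*(((ℓ:ℕ):ZMod ℓ)^(2*m) * ((z:ℤ):ZMod ℓ)) := by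
      rw [hδp, hL]; push_cast; ring
    rw [h1, h0, ZMod.natCast_self, zero_pow (by omega : 2*m ≠ 0)]
    ring
  have h2F : (2 : ZMod ℓ) ≠ 0 := by
    intro h0
    have h1 : ((2:ℕ) : ZMod ℓ) = 0 := by exact_mod_cast h0
    have h2 := (ZMod.natCast_eq_zero_iff 2 ℓ).mp h1
    exact hℓodd ((Nat.prime_dvd_prime_iff_eq hℓ Nat.prime_two).mp h2)
  have hvF : ((v:ℤ) : ZMod ℓ) ≠ 0 := by
    rw [Ne, ZMod.intCast_zmod_eq_zero_iff_dvd]; exact hv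
  -- apply the key power congruence
  obtain ⟨t, ht, htc⟩ := key_pow ℓ hℓ hℓodd j hj0 D v n
  have hAD : A = D + (ℓ:ℤ)^j * v := by rw [hA, hD, hv_def]; ring
  rw [← hAD, hjn, ← hg] at ht
  -- ht : A^g = D^g + ℓ^m * t
  rw [← hg] at htc
  set G : ℤ := D^g with hG
  -- the V-sequence fact
  have hVK := Useq_mul_sub A D K
  have hAK : A^K - D^K = (ℓ:ℤ)^m * t * (2*G + (ℓ:ℤ)^m * t) := by
    have h1 : A^K = (A^g)^2 := by rw [hK, Nat.mul_comm, pow_mul]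
    have h2 : D^K = (D^g)^2 := by rw [hK, Nat.mul_comm, pow_mul]
    rw [h1, h2, ht, hG]
    ring
  have hVK2 : (ℓ:ℤ)^j * (v * Useq (A+D) (A*D) K)
      = (ℓ:ℤ)^j * ((ℓ:ℤ)^n * t * (2*G + (ℓ:ℤ)^m * t)) := by
    have hADv : A - D = (ℓ:ℤ)^j * v := by rw [hAD]; ring
    have hjm' : (ℓ:ℤ)^j * (ℓ:ℤ)^n = (ℓ:ℤ)^m := by rw [← pow_add, hjn]
    calc (ℓ:ℤ)^j * (v * Useq (A+D) (A*D) K) = (A - D) * Useq (A+D) (A*D) K := by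
            rw [hADv]; ring
      _ = A^K - D^K := hVK
      _ = (ℓ:ℤ)^m * t * (2*G + (ℓ:ℤ)^m * t) := hAK
      _ = (ℓ:ℤ)^j * ((ℓ:ℤ)^n * t * (2*G + (ℓ:ℤ)^m * t)) := by rw [← hjm']; ring
  have hVKc : v * Useq (A+D) (A*D) K = (ℓ:ℤ)^n * t * (2*G + (ℓ:ℤ)^m * t) :=
    mul_left_cancel₀ (pow_ne_zero j hl0) hVK2
  -- U ≡ V
  set uK := Useq T δp K with huKdef
  have hUV : uK ≡ Useq T (A*D) K [ZMOD (ℓ:ℤ)^(n+1)] := by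
    refine Useq_modEq T δp (A*D) _ ?_ K
    rw [Int.modEq_iff_dvd]
    have : A*D - δp = b*(L*z) := by rw [hδp]; ring
    rw [this, hL]
    have h2m : (ℓ:ℤ)^(2*m) = (ℓ:ℤ)^(n+1) * (ℓ:ℤ)^(2*m-(n+1)) := by
      rw [← pow_add]; congr 1; omega
    exact ⟨b*((ℓ:ℤ)^(2*m-(n+1))*z), by rw [h2m]; ring⟩
  have hUVT : Useq T (A*D) K = Useq (A+D) (A*D) K := by rw [hT]
  rw [hUVT] at hUV
  have hfull : v * uK ≡ (ℓ:ℤ)^n * t * (2*G + (ℓ:ℤ)^m * t) [ZMOD (ℓ:ℤ)^(n+1)] := by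
    calc v * uK ≡ v * Useq (A+D) (A*D) K [ZMOD (ℓ:ℤ)^(n+1)] := hUV.mul_left v
      _ = (ℓ:ℤ)^n * t * (2*G + (ℓ:ℤ)^m * t) := hVKc
  obtain ⟨q, hq⟩ := Int.modEq_iff_dvd.mp hfull
  have hiden : (ℓ:ℤ)^n * (ℓ:ℤ)^m = (ℓ:ℤ)^(n+1) * (ℓ:ℤ)^(m-1) := by
    rw [← pow_add, ← pow_add]; congr 1; omega
  set r : ℤ := (ℓ:ℤ)^(m-1) * t^2 - q with hr
  have hvuK : v * uK = 2*(ℓ:ℤ)^n*t*G + (ℓ:ℤ)^(n+1) * r := by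
    rw [hr]
    linear_combination -hq + t^2 * hiden
  have hluK : (ℓ:ℤ) ∣ uK := by
    have hln : (ℓ:ℤ)^n = (ℓ:ℤ) * (ℓ:ℤ)^(n-1) := by
      rw [← pow_succ']; congr 1; omega
    have hln1 : (ℓ:ℤ)^(n+1) = (ℓ:ℤ) * (ℓ:ℤ)^n := by rw [pow_succ']
    have h1 : (ℓ:ℤ) ∣ v * uK := by
      refine ⟨2*(ℓ:ℤ)^(n-1)*t*G + (ℓ:ℤ)*((ℓ:ℤ)^(n-1)*r), ?_⟩
      rw [hvuK, hln1, hln]; ring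
    have hp : Prime (ℓ:ℤ) := Nat.prime_iff_prime_int.mp hℓ
    exact (hp.dvd_mul.mp h1).resolve_left hv
  obtain ⟨u1, hu1⟩ := hluK
  -- the residue-field data
  have hDtF : ((D:ℤ):ZMod ℓ) * ((t:ℤ):ZMod ℓ) = ((v:ℤ):ZMod ℓ) * ((G:ℤ):ZMod ℓ) := by
    have h1 : (((D*t : ℤ)) : ZMod ℓ) = (((v*G : ℤ)) : ZMod ℓ) := by
      rw [ZMod.intCast_eq_intCast_iff]
      exact_mod_cast htc
    push_cast at h1
    exact h1
  have hGf : ((G:ℤ) : ZMod ℓ) ≠ 0 := by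
    rw [hG]; push_cast; exact pow_ne_zero _ hDF
  set μ : ZMod ℓ := 2 * ((v:ℤ):ZMod ℓ) * ((G:ℤ):ZMod ℓ)^2 with hμdef
  have hμ0 : μ ≠ 0 := mul_ne_zero (mul_ne_zero h2F hvF) (pow_ne_zero _ hGf)
  obtain ⟨cc, hcc⟩ := exists_nonsquare_add ℓ hℓ hℓodd μ hμ0
  set E : ZMod ℓ := 2 * ((δp:ℤ):ZMod ℓ)^g * ((D:ℤ):ZMod ℓ) with hE
  have hE0 : E ≠ 0 := mul_ne_zero (mul_ne_zero h2F (pow_ne_zero _ hδpF)) hDF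
  set s₀ : ℤ := ((cc * E⁻¹).val : ℤ) with hs₀
  have hs₀F : ((s₀:ℤ):ZMod ℓ) = cc * E⁻¹ := by
    rw [hs₀, Int.cast_natCast, ZMod.natCast_val, ZMod.cast_id]
  have hEs₀ : E * ((s₀:ℤ):ZMod ℓ) = cc := by
    rw [hs₀F, mul_comm cc, ← mul_assoc, mul_inv_cancel₀ hE0, one_mul]
  -- the matrix R
  set Rm : Matrix (Fin 2) (Fin 2) ℤ := !![1, s₀; L*s₀, 1] with hRm
  have hdetRm : Rm.det = 1 - L*s₀^2 := by
    rw [hRm, Matrix.det_fin_two_of]; ring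
  have hRunit : IsUnit ((Int.castRingHom Rg).mapMatrix Rm) := by
    rw [Matrix.isUnit_iff_isUnit_det, ← RingHom.map_det]
    have hnil : IsNilpotent ((ℓ:Rg) * (((ℓ:ℤ)^(2*m-1)*s₀^2 : ℤ) : Rg)) := by
      refine ⟨2*m+1, ?_⟩
      rw [mul_pow]
      have hz : (ℓ:Rg)^(2*m+1) = 0 := by
        have h := ZMod.natCast_self (ℓ^(2*m+1))
        exact_mod_cast h
      rw [hz, zero_mul]
    have hdc : (Int.castRingHom Rg) Rm.det
        = 1 - (ℓ:Rg)*(((ℓ:ℤ)^(2*m-1)*s₀^2 : ℤ) : Rg) := by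
      have hLsplit : (ℓ:ℤ)^(2*m) = (ℓ:ℤ) * (ℓ:ℤ)^(2*m-1) := by
        rw [← pow_succ']; congr 1; omega
      rw [hdetRm, hL, hLsplit]
      rw [show ⇑(Int.castRingHom Rg) = (Int.cast : ℤ → Rg) from rfl]
      push_cast +zetaDelta
      ring
    rw [hdc]
    exact IsNilpotent.isUnit_one_sub hnil
  set R : Matrix.GeneralLinearGroup (Fin 2) (ZMod (ℓ ^ (2 * m + 1))) := hRunit.unit with hR
  have hRval : R.val = (Int.castRingHom Rg).mapMatrix Rm := hRunit.unit_spec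
  have hKmem : Kmem ℓ m R.val := by
    refine ⟨1, ((s₀:ℤ):Rg), 1, ?_, rfl⟩
    rw [hRval, hRm]
    ext i j'
    fin_cases i <;> fin_cases j' <;>
      simp [RingHom.mapMatrix_apply, Matrix.map_apply, hL] <;> push_cast <;> ring
  obtain ⟨σ, hσ⟩ := hsq K R hKmem
  -- the explicit form of M^K
  set u' := Useq T δp (K-1) with hu'def
  have hMK : M^K = !![uK*A - δp*u', uK*b; uK*(L*z), uK*D - δp*u'] := by
    have h := ypow A D b (L*z) (K-1)
    rw [hK1] at h
    rw [← hδp, ← hT, ← hM, ← huKdef, ← hu'def] at h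
    exact h
  -- trace and determinant of the integer model
  set Pm : Matrix (Fin 2) (Fin 2) ℤ := M^K * Rm with hPm
  set W : ℤ := uK*T - 2*δp*u' with hW
  have htrPm : Matrix.trace Pm = W + L*(uK*(s₀*(b+z))) := by
    rw [hPm, hMK, hRm, hW]
    simp [Matrix.trace_fin_two, Matrix.mul_apply, Fin.sum_univ_two]
    ring
  have hdetPm : Pm.det = δp^K * (1 - L*s₀^2) := by
    rw [hPm, Matrix.det_mul, Matrix.det_pow, hdetRm]
    congr 1
    rw [hM, Matrix.det_fin_two_of, hδp]
  set Dint : ℤ := (Matrix.trace Pm)^2 - 4*Pm.det with hDint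
  -- σ² is the cast of Dint
  have hσc : σ^2 = ((Dint:ℤ) : Rg) := by
    have hYK : Y.val^K = (Int.castRingHom Rg).mapMatrix (M^K) := by
      rw [hYm, ← map_pow]
    have hprod : Y.val^K * R.val = (Int.castRingHom Rg).mapMatrix Pm := by
      rw [hYK, hRval, ← map_mul, hPm]
    have htrm : Matrix.trace ((Int.castRingHom Rg).mapMatrix Pm)
        = ((Matrix.trace Pm : ℤ) : Rg) := by
      rw [Matrix.trace_fin_two, Matrix.trace_fin_two]
      simp [RingHom.mapMatrix_apply, Matrix.map_apply]
    have hdetm : ((Int.castRingHom Rg).mapMatrix Pm).det = ((Pm.det : ℤ) : Rg) := by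
      rw [← RingHom.map_det]
      rfl
    rw [← hσ, hprod, htrm, hdetm, hDint]
    push_cast +zetaDelta
    ring
  -- the main integral congruence
  have htrW : Matrix.trace Pm ≡ W [ZMOD (ℓ:ℤ)^(2*m+1)] := by
    rw [htrPm]
    refine Int.modEq_iff_dvd.mpr ⟨-(u1*(s₀*(b+z))), ?_⟩
    rw [hu1, hModL]
    ring
  have hDc1 : Dint ≡ W^2 - 4*(δp^K*(1 - L*s₀^2)) [ZMOD (ℓ:ℤ)^(2*m+1)] := by
    rw [hDint, hdetPm]
    exact (htrW.pow 2).sub (Int.ModEq.refl _)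
  have hnorm : uK^2 - T*uK*u' + δp*u'^2 = δp^(K-1) := by
    have h := Useq_norm T δp (K-1)
    rw [hK1, ← huKdef, ← hu'def] at h
    exact h
  have hδK : δp^K = δp * δp^(K-1) := by
    conv_lhs => rw [← hK1, pow_succ]
    ring
  have hstep2 : W^2 - 4*(δp^K*(1 - L*s₀^2)) =
      uK^2*((ℓ:ℤ)^(2*j)*v^2) + uK^2*(4*L*b*z) + L*(4*δp^K*s₀^2) := by
    rw [hδK, ← hnorm]
    have h2j : ((ℓ:ℤ))^(2*j) = ((ℓ:ℤ)^j)^2 := by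
      rw [show 2*j = j*2 from Nat.mul_comm 2 j, pow_mul]
    rw [h2j]
    have hADv : (ℓ:ℤ)^j * v = A - D := by rw [hAD]; ring
    rw [hW, hT, hδp]
    linear_combination (-(uK^2 * ((ℓ:ℤ)^j*v + A - D))) * hADv
  have hLjn : (ℓ:ℤ)^(2*j)*((ℓ:ℤ)^n)^2 = L := by
    rw [hL, ← pow_mul, ← pow_add]; congr 1; omega
  have hsq2 : (v*uK)^2 = (2*(ℓ:ℤ)^n*t*G + (ℓ:ℤ)^(n+1)*r)^2 := by rw [hvuK]
  have hstep3 : uK^2*((ℓ:ℤ)^(2*j)*v^2) ≡ L*(4*t^2*G^2) [ZMOD (ℓ:ℤ)^(2*m+1)] := by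
    refine Int.modEq_iff_dvd.mpr ⟨-(4*t*G*r + (ℓ:ℤ)*r^2), ?_⟩
    rw [hModL]
    have hln1 : (ℓ:ℤ)^(n+1) = (ℓ:ℤ) * (ℓ:ℤ)^n := by rw [pow_succ']
    rw [hln1] at hsq2
    rw [← hLjn]
    linear_combination (-(ℓ:ℤ)^(2*j)) * hsq2
  have hstep4 : uK^2*(4*L*b*z) ≡ 0 [ZMOD (ℓ:ℤ)^(2*m+1)] := by
    refine Int.modEq_zero_iff_dvd.mpr ⟨(ℓ:ℤ)*u1^2*4*b*z, ?_⟩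
    rw [hu1, hModL]
    ring
  set NN : ℤ := 4*t^2*G^2 + 4*δp^K*s₀^2 with hNN
  have modc : Dint ≡ L * NN [ZMOD (ℓ:ℤ)^(2*m+1)] := by
    refine hDc1.trans ?_
    rw [hstep2]
    have hcomb := (hstep3.add hstep4).add (Int.ModEq.refl (L*(4*δp^K*s₀^2)))
    have hre : L*(4*t^2*G^2) + 0 + L*(4*δp^K*s₀^2) = L*NN := by rw [hNN]; ring
    rw [hre] at hcomb
    exact hcomb
  -- cast the congruence to the ZMod ring
  have hmodcast : ((ℓ^(2*m+1) : ℕ) : ℤ) = (ℓ:ℤ)^(2*m+1) := by push_cast; ring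
  have hDcast : ((Dint:ℤ):Rg) = ((L*NN : ℤ):Rg) := by
    rw [ZMod.intCast_eq_intCast_iff]
    rw [hmodcast]
    exact modc
  set τ : Rg := ((D:ℤ):Rg) * σ with hτdef
  set NN₂ : ℤ := D^2*NN with hNN₂
  have hτ : τ^2 = ((L*NN₂ : ℤ) : Rg) := by
    have hre : ((L*NN₂ : ℤ) : Rg) = ((D:ℤ):Rg)^2 * ((L*NN : ℤ):Rg) := by
      rw [hNN₂]; push_cast +zetaDelta; ring
    rw [hre, hτdef, mul_pow, hσc, hDcast]
  -- residue-field computation of NN₂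
  have hKg : δp^K = (δp^g)^2 := by
    rw [show K = g*2 from by rw [hK]; ring, pow_mul]
  have hNNF : ((NN₂ : ℤ) : ZMod ℓ) = μ^2 + cc^2 := by
    rw [hNN₂, hNN, hKg]
    push_cast
    rw [hμdef, ← hEs₀, hE]
    linear_combination (4*((G:ℤ):ZMod ℓ)^2
      *(((D:ℤ):ZMod ℓ)*((t:ℤ):ZMod ℓ)+((v:ℤ):ZMod ℓ)*((G:ℤ):ZMod ℓ))) * hDtF
  have hNNl : ¬ (ℓ:ℤ) ∣ NN₂ := by
    intro hdd
    have h0 : ((NN₂:ℤ):ZMod ℓ) = 0 := (ZMod.intCast_zmod_eq_zero_iff_dvd _ _).mpr hdd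
    rw [hNNF] at h0
    exact hcc 0 (by rw [h0]; ring)
  -- extract the valuation of τ
  have hτe : ((τ.val : ℤ) : Rg) = τ := by
    push_cast
    rw [ZMod.natCast_val, ZMod.cast_id]
  have hcong : ((τ.val:ℤ))^2 ≡ L*NN₂ [ZMOD (ℓ:ℤ)^(2*m+1)] := by
    have h1 : (((τ.val:ℤ)^2 : ℤ) : Rg) = ((L*NN₂ : ℤ) : Rg) := by
      rw [← hτ]
      push_cast
      rw [show ((τ.val:ℕ) : Rg) = τ from by rw [ZMod.natCast_val, ZMod.cast_id]]
    rw [ZMod.intCast_eq_intCast_iff, hmodcast] at h1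
    exact h1
  obtain ⟨Q, hQ⟩ := Int.modEq_iff_dvd.mp hcong
  -- τ.val² = L*(NN₂ - ℓQ)
  have he2 : ((τ.val:ℤ))^2 = L*(NN₂ - (ℓ:ℤ)*Q) := by
    rw [hModL] at hQ
    linear_combination -hQ
  have hene : τ.val ≠ 0 := by
    intro h0
    rw [h0] at he2
    simp only [Nat.cast_zero] at he2
    have h1 : (0:ℤ) = NN₂ - (ℓ:ℤ)*Q := by
      rcases mul_eq_zero.mp he2.symm with h | h
      · exact absurd h (by rw [hL]; exact pow_ne_zero _ hl0)
      · exact h.symm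
    exact hNNl ⟨Q, by linarith⟩
  have hdvdN : ℓ^(2*m) ∣ τ.val^2 := by
    have h1 : (ℓ:ℤ)^(2*m) ∣ ((τ.val:ℤ))^2 := ⟨NN₂ - (ℓ:ℤ)*Q, by rw [he2, hL]⟩
    have h2 : ((ℓ^(2*m) : ℕ) : ℤ) ∣ ((τ.val^2 : ℕ) : ℤ) := by push_cast; exact h1
    exact_mod_cast h2
  have hfac : m ≤ (τ.val).factorization ℓ := by
    have h2 := (Nat.Prime.pow_dvd_iff_le_factorization hℓ
      (pow_ne_zero 2 hene)).mp hdvdN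
    rw [Nat.factorization_pow] at h2
    simp only [Finsupp.smul_apply, smul_eq_mul] at h2
    omega
  obtain ⟨dd, hdd⟩ := (Nat.Prime.pow_dvd_iff_le_factorization hℓ hene).mpr hfac
  have hdd2 : (dd:ℤ)^2 = NN₂ - (ℓ:ℤ)*Q := by
    have h3 : ((τ.val:ℤ))^2 = (ℓ:ℤ)^(2*m) * (dd:ℤ)^2 := by
      rw [hdd]; push_cast; ring
    rw [h3, hL] at he2
    exact mul_left_cancel₀ (pow_ne_zero _ hl0) he2
  have hFq : ((NN₂:ℤ):ZMod ℓ) = (((dd:ℤ)):ZMod ℓ)^2 := by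
    have h4 : ((dd:ℤ))^2 ≡ NN₂ [ZMOD (ℓ:ℤ)] := Int.modEq_iff_dvd.mpr ⟨Q, by linarith [hdd2]⟩
    have h5 : (((dd:ℤ)^2 : ℤ) : ZMod ℓ) = ((NN₂ : ℤ) : ZMod ℓ) := by
      rw [ZMod.intCast_eq_intCast_iff]
      exact_mod_cast h4
    rw [← h5]
    push_cast
    ring
  exact hcc (((dd:ℤ)):ZMod ℓ) (by rw [← hNNF, hFq])
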